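/- For |X| = 2, the minimum of E_q(f) over the χ²-ball B_{χ²}(p,δ) equals p(x_1)f(x_1) + p(x_2)f(x_2) - √(δ·p(x_1)·p(x_2))·|f(x_2)-f(x_1)| if δ < p(x_2)/p(x_1), and equals f(x_1) if δ ≥ p(x_2)/p(x_1). -/

import Mathlib

open Finset

/-- Closed form for the lower expectation over a χ² ball on a binary space. -/
theorem chi2_binary_lower_expectation
    (f p : Fin 2 → ℝ) (hf : f 0 ≤ f 1)
    (hp0 : ∀ i, 0 < p i) (hp1 : p 0 + p 1 = 1)
    (δ : ℝ) (hδ : 0 ≤ δ) :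
    let B : Set (Fin 2 → ℝ) :=
      {q | ((∀ i, 0 ≤ q i) ∧ q 0 + q 1 = 1) ∧
        (q 0 - p 0) ^ 2 / p 0 + (q 1 - p 1) ^ 2 / p 1 ≤ δ}
    IsLeast ((fun q : Fin 2 → ℝ => q 0 * f 0 + q 1 * f 1) '' B)
      (if δ < p 1 / p 0 then
        p 0 * f 0 + p 1 * f 1 - Real.sqrt (δ * p 0 * p 1) * |f 1 - f 0|
      else f 0) := by
  intro B
  have hp0' := hp0 0
  have hp1' := hp0 1
  have hsprod : 0 ≤ δ * p 0 * p 1 := by positivity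
  set s := Real.sqrt (δ * p 0 * p 1) with hsdef
  have hs0 : 0 ≤ s := Real.sqrt_nonneg _
  have hs2 : s ^ 2 = δ * p 0 * p 1 := Real.sq_sqrt hsprod
  have habs : |f 1 - f 0| = f 1 - f 0 := abs_of_nonneg (by linarith)
  constructor
  · -- membership
    by_cases hcase : δ < p 1 / p 0
    · rw [if_pos hcase, habs]
      have hdlt : δ * p 0 < p 1 := (lt_div_iff₀ hp0').mp hcase
      have hsp1 : s ≤ p 1 := by nlinarith
      refine ⟨![p 0 + s, p 1 - s], ⟨⟨?_, ?_⟩, ?_⟩, ?_⟩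
      · intro i
        fin_cases i <;> simp <;> linarith
      · simp; linarith
      · simp only [Set.mem_setOf_eq, Matrix.cons_val_zero, Matrix.cons_val_one, Matrix.head_cons]
        have : (p 0 + s - p 0) ^ 2 / p 0 + (p 1 - s - p 1) ^ 2 / p 1 = δ := by
          field_simp
          nlinarith [hs2]
        linarith
      · simp only [Matrix.cons_val_zero, Matrix.cons_val_one, Matrix.head_cons]
        ring
    · rw [if_neg hcase]
      have hdge : p 1 ≤ δ * p 0 := by
        have := (not_lt.mp hcase)
        calc p 1 = (p 1 / p 0) * p 0 := by field_simp
        _ ≤ δ * p 0 := by nlinarith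
      refine ⟨![1, 0], ⟨⟨?_, ?_⟩, ?_⟩, ?_⟩
      · intro i; fin_cases i <;> simp
      · simp
      · simp only [Set.mem_setOf_eq, Matrix.cons_val_zero, Matrix.cons_val_one, Matrix.head_cons]
        have : (1 - p 0) ^ 2 / p 0 + (0 - p 1) ^ 2 / p 1 = p 1 / p 0 := by
          have h1 : (1 : ℝ) - p 0 = p 1 := by linarith
          rw [h1]
          field_simp
          linear_combination p 1 ^ 2 * hp1
        rw [this]
        exact (div_le_iff₀ hp0').mpr (by linarith)
      · simp
  · -- lower bound
    rintro y ⟨q, ⟨⟨hq0, hqsum⟩, hqc⟩, rfl⟩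
    have hneg : q 1 - p 1 = -(q 0 - p 0) := by linarith
    rw [hneg] at hqc
    have key : (q 0 - p 0) ^ 2 ≤ δ * p 0 * p 1 := by
      rw [neg_pow, div_add_div _ _ (ne_of_gt hp0') (ne_of_gt hp1'),
        div_le_iff₀ (by positivity)] at hqc
      nlinarith
    have ht : q 0 - p 0 ≤ s := by nlinarith
    by_cases hcase : δ < p 1 / p 0
    · rw [if_pos hcase, habs]
      have hq1 : q 1 = p 1 - (q 0 - p 0) := by linarith
      show p 0 * f 0 + p 1 * f 1 - s * (f 1 - f 0) ≤ q 0 * f 0 + q 1 * f 1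
      rw [hq1]
      nlinarith [mul_nonneg (sub_nonneg.mpr ht) (sub_nonneg.mpr hf)]
    · rw [if_neg hcase]
      have hq0le : q 0 - p 0 ≤ p 1 := by
        have := hq0 1; linarith
      show f 0 ≤ q 0 * f 0 + q 1 * f 1
      have hq0eq : q 0 = 1 - q 1 := by linarith
      rw [hq0eq]
      nlinarith [mul_nonneg (hq0 1) (sub_nonneg.mpr hf)]
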